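/- For every E with 0 < E ≤ 1, the period-type integral 𝒯_E = ∫_{−π}^{π} dx / √(2(E + 2 sin²(x/2))) satisfies the bound 𝒯_E ≤ √2 · π · ( ln(1 + √(1 + E)) − ln E ). -/

import Mathlib

open Real intervalIntegral

lemma aux_ineq (E c t : ℝ) (hE0 : 0 < E) (hE1 : E ≤ 1) (hc0 : 0 < c)
    (hc2 : c ^ 2 = 2 * E) (ht1 : 1 ≤ t) (ht2 : t ^ 2 = 1 + E) :
    (c + 2) * E ≤ (1 + t) * c := by
  have hc2le : c ^ 2 ≤ 2 := by linarith
  have ha : 0 < t + (c + c ^ 2 / 2 - 1) := by nlinarith [sq_nonneg c]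
  have hprod : 0 ≤ (t + (c + c ^ 2 / 2 - 1)) * (t - (c + c ^ 2 / 2 - 1)) := by
    have hfac : (t + (c + c ^ 2 / 2 - 1)) * (t - (c + c ^ 2 / 2 - 1))
        = c / 4 * ((2 - c ^ 2) * (c + 4)) := by linear_combination ht2 - hc2 / 2
    rw [hfac]
    have h1 : 0 ≤ 2 - c ^ 2 := by linarith
    positivity
  have hta : 0 ≤ t - (c + c ^ 2 / 2 - 1) := by nlinarith [hprod, ha]
  nlinarith [mul_nonneg hc0.le hta]

/-- **Bound on the period of a rotating pendulum solution.** For `0 < E ≤ 1`,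
the time of one full revolution `𝒯_E = ∫_{−π}..{π} dx/√(2(E + 2 sin²(x/2)))`
satisfies `𝒯_E ≤ √2 · π · (ln(1 + √(1 + E)) − ln E)`. -/
theorem period_integral_bound (E : ℝ) (hE0 : 0 < E) (hE1 : E ≤ 1) :
    (∫ x in (-Real.pi)..Real.pi,
        (2 * (E + 2 * Real.sin (x / 2) ^ 2)) ^ (-(1:ℝ)/2)) ≤
      Real.sqrt 2 * Real.pi *
        (Real.log (1 + Real.sqrt (1 + E)) - Real.log E) := by
  have hπ : (0:ℝ) < Real.pi := Real.pi_pos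
  set c : ℝ := Real.sqrt (2 * E) with hc
  have hc0 : 0 < c := Real.sqrt_pos.2 (by linarith)
  have hc2 : c ^ 2 = 2 * E := Real.sq_sqrt (by linarith)
  have hc2le : c ^ 2 ≤ 2 := by linarith
  set f : ℝ → ℝ := fun x => (2 * (E + 2 * Real.sin (x / 2) ^ 2)) ^ (-(1:ℝ)/2) with hf
  set g : ℝ → ℝ := fun x => Real.sqrt 2 / (c + (2 / Real.pi) * x) with hg
  -- continuity of f
  have hfc : Continuous f := by
    apply Continuous.rpow_const (by continuity)
    intro x
    left
    have : (0:ℝ) < 2 * (E + 2 * Real.sin (x / 2) ^ 2) := by positivity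
    exact this.ne'
  have hfint : ∀ a b : ℝ, IntervalIntegrable f MeasureTheory.volume a b :=
    fun a b => hfc.intervalIntegrable a b
  -- continuity of g on relevant region
  have hgpos : ∀ x : ℝ, 0 ≤ x → 0 < c + (2 / Real.pi) * x := by
    intro x hx
    have : 0 ≤ (2 / Real.pi) * x := by positivity
    linarith
  have hgc : ContinuousOn g (Set.Icc 0 Real.pi) := by
    apply ContinuousOn.div continuousOn_const
    · fun_prop
    · intro x hx
      exact (hgpos x hx.1).ne'
  have hgint : IntervalIntegrable g MeasureTheory.volume 0 Real.pi := by
    apply ContinuousOn.intervalIntegrable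
    rwa [Set.uIcc_of_le hπ.le]
  -- symmetry: integral over [-π,π] is twice integral over [0,π]
  have hsymm : (∫ x in (-Real.pi)..Real.pi, f x) = 2 * ∫ x in (0:ℝ)..Real.pi, f x := by
    have h1 : (∫ x in (-Real.pi)..(0:ℝ), f x) + (∫ x in (0:ℝ)..Real.pi, f x)
        = ∫ x in (-Real.pi)..Real.pi, f x :=
      integral_add_adjacent_intervals (hfint _ _) (hfint _ _)
    have h2 : (∫ x in (-Real.pi)..(0:ℝ), f x) = ∫ x in (0:ℝ)..Real.pi, f x := by
      have h3 := intervalIntegral.integral_comp_neg (a := 0) (b := Real.pi) f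
      rw [neg_zero] at h3
      rw [← h3]
      apply intervalIntegral.integral_congr
      intro x _
      simp only [hf]
      rw [neg_div, Real.sin_neg]
      ring_nf
    linarith
  rw [hsymm]
  -- pointwise bound f ≤ g on [0,π]
  have hpoint : ∀ x ∈ Set.Icc (0:ℝ) Real.pi, f x ≤ g x := by
    intro x hx
    obtain ⟨hx0, hxπ⟩ := hx
    have hsin : x / Real.pi ≤ Real.sin (x / 2) := by
      simpa using Real.mul_le_sin (x := x / 2) (by positivity) (by linarith)
    have hsq : (x / Real.pi) ^ 2 ≤ Real.sin (x / 2) ^ 2 :=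
      pow_le_pow_left₀ (by positivity) hsin 2
    have hA0 : (0:ℝ) < 2 * (E + 2 * (x / Real.pi) ^ 2) := by positivity
    have step1 : f x ≤ (2 * (E + 2 * (x / Real.pi) ^ 2)) ^ (-(1:ℝ)/2) := by
      apply Real.rpow_le_rpow_of_nonpos hA0 (by nlinarith)
      norm_num
    have hrw : (2 * (E + 2 * (x / Real.pi) ^ 2)) ^ (-(1:ℝ)/2)
        = (Real.sqrt (2 * (E + 2 * (x / Real.pi) ^ 2)))⁻¹ := by
      rw [neg_div, Real.rpow_neg hA0.le, Real.sqrt_eq_rpow]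
    have hkey : c + (2 / Real.pi) * x
        ≤ Real.sqrt 2 * Real.sqrt (2 * (E + 2 * (x / Real.pi) ^ 2)) := by
      rw [← Real.sqrt_mul (by norm_num : (0:ℝ) ≤ 2)]
      rw [Real.le_sqrt (by positivity) (by positivity)]
      have h4 : (0:ℝ) ≤ (c - (2 / Real.pi) * x) ^ 2 := sq_nonneg _
      have hxπ2 : (2 / Real.pi) * x = 2 * (x / Real.pi) := by ring
      nlinarith [sq_nonneg (c - 2 * (x / Real.pi))]
    have step2 : (Real.sqrt (2 * (E + 2 * (x / Real.pi) ^ 2)))⁻¹ ≤ g x := by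
      rw [hg, inv_eq_one_div, div_le_div_iff₀ (Real.sqrt_pos.2 hA0) (hgpos x hx0)]
      linarith [hkey]
    calc f x ≤ _ := step1
      _ = _ := hrw
      _ ≤ g x := step2
  have hmono : (∫ x in (0:ℝ)..Real.pi, f x) ≤ ∫ x in (0:ℝ)..Real.pi, g x :=
    intervalIntegral.integral_mono_on hπ.le (hfint _ _) hgint hpoint
  -- compute integral of g
  have hgval : (∫ x in (0:ℝ)..Real.pi, g x)
      = Real.sqrt 2 * Real.pi / 2 * (Real.log (c + 2) - Real.log c) := by
    have hderiv : ∀ x ∈ Set.uIcc (0:ℝ) Real.pi,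
        HasDerivAt (fun y => Real.sqrt 2 * Real.pi / 2 * Real.log (c + (2 / Real.pi) * y))
          (g x) x := by
      intro x hx
      rw [Set.uIcc_of_le hπ.le] at hx
      have hpos := hgpos x hx.1
      have hinner : HasDerivAt (fun y : ℝ => c + (2 / Real.pi) * y) (2 / Real.pi) x := by
        simpa using ((hasDerivAt_id x).const_mul (2 / Real.pi)).const_add c
      have hlog := (Real.hasDerivAt_log hpos.ne').comp x hinner
      have h5 := hlog.const_mul (Real.sqrt 2 * Real.pi / 2)
      simp only [Function.comp] at h5
      convert h5 using 1
      show Real.sqrt 2 / (c + 2 / Real.pi * x)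
          = Real.sqrt 2 * Real.pi / 2 * ((c + 2 / Real.pi * x)⁻¹ * (2 / Real.pi))
      have h3 : Real.pi * (c + 2 / Real.pi * x) = c * Real.pi + 2 * x := by
        field_simp
      have h6 : c * Real.pi + 2 * x ≠ 0 := by
        rw [← h3]; positivity
      rw [div_eq_mul_inv]
      field_simp
      all_goals rfl
    rw [intervalIntegral.integral_eq_sub_of_hasDerivAt hderiv hgint]
    rw [mul_zero, add_zero]
    rw [show c + 2 / Real.pi * Real.pi = c + 2 by field_simp]
    ring
  -- final log inequality
  have hfinal : Real.sqrt 2 * Real.pi * (Real.log (c + 2) - Real.log c)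
      ≤ Real.sqrt 2 * Real.pi * (Real.log (1 + Real.sqrt (1 + E)) - Real.log E) := by
    have hs2 : (0:ℝ) < Real.sqrt 2 := by positivity
    apply mul_le_mul_of_nonneg_left _ (by positivity)
    set t : ℝ := Real.sqrt (1 + E) with ht
    have ht1 : 1 ≤ t := by
      rw [ht, Real.one_le_sqrt]
      linarith
    have ht2 : t ^ 2 = 1 + E := Real.sq_sqrt (by linarith)
    rw [← Real.log_div (by positivity) hc0.ne', ← Real.log_div (by positivity) hE0.ne']
    apply Real.log_le_log (by positivity)
    rw [div_le_div_iff₀ hc0 hE0]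
    exact aux_ineq E c t hE0 hE1 hc0 hc2 ht1 ht2
  calc 2 * ∫ x in (0:ℝ)..Real.pi, f x ≤ 2 * ∫ x in (0:ℝ)..Real.pi, g x := by linarith
    _ = Real.sqrt 2 * Real.pi * (Real.log (c + 2) - Real.log c) := by rw [hgval]; ring
    _ ≤ _ := hfinal
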